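/- Let p^n ≡ 2 (mod 3), L the quadratic extension of F with |F| = p^n, and s = 1 + k(p^n-1) coprime to p^{2n}-1. If x ∈ L satisfies x^{3(p^n-1)} = 1, then Tr_{L/F}(x^s - x) = 0. -/

import Mathlib

open scoped BigOperators

/-- The Weil sum `W_{F,s}(a) = ∑_{x ∈ F} μ(x^s - a x)`, where `μ` is the canonical
additive character `μ(x) = ζ_p^{Tr_{F/𝔽_p}(x)}` of the finite field `F`. -/
noncomputable def weilSum (p : ℕ) (F : Type) [Field F] [Fintype F]
    [Algebra (ZMod p) F] (s : ℕ) (a : F) : ℂ :=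
  ∑ x : F, Complex.exp (2 * Real.pi * Complex.I *
    ((Algebra.trace (ZMod p) F (x ^ s - a * x)).val : ℂ) / (p : ℂ))

/-- if `p^n ≡ 2 (mod 3)`, `s = 1 + k(p^n-1)` coprime to `p^{2n}-1`, and
`x^{3(p^n-1)} = 1`, then `Tr_{L/F}(x^s - x) = 0`. -/
theorem trace_zero_of_three_torsion (p n : ℕ) [Fact p.Prime] (hn : 0 < n)
    (F L : Type) [Field F] [Fintype F] [Field L] [Fintype L] [Algebra F L]
    (hF : Fintype.card F = p ^ n) (hL : Fintype.card L = p ^ (2 * n))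
    (hp3 : p ^ n % 3 = 2)
    (k s : ℕ) (hsk : s = 1 + k * (p ^ n - 1)) (hs : Nat.Coprime s (p ^ (2 * n) - 1))
    (x : L) (hx : x ^ (3 * (p ^ n - 1)) = 1) :
    Algebra.trace F L (x ^ s - x) = 0 := by
  classical
  have hp : p.Prime := Fact.out
  have hq2 : 2 ≤ p ^ n := le_trans hp.two_le (Nat.le_self_pow hn.ne' p)
  haveI : CharP L p := by
    obtain ⟨r, hr⟩ := CharP.exists L
    haveI := hr
    haveI hrp : Fact r.Prime := ⟨CharP.char_is_prime L r⟩
    obtain ⟨m, -, hm⟩ := FiniteField.card L r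
    have hpr : p = r := by
      have h1 : p ∣ r ^ (m : ℕ) := by
        rw [← hm, hL]
        exact dvd_pow_self p (by positivity)
      exact (Nat.prime_dvd_prime_iff_eq hp hrp.out).mp (hp.dvd_of_dvd_pow h1)
    rwa [hpr]
  haveI : FiniteDimensional F L := Module.Finite.of_finite
  -- the Frobenius `y ↦ y ^ (p ^ n)` as an `F`-algebra map
  have hfrob : ∀ y : L, ((frobenius L p) ^ n) y = y ^ (p ^ n) := fun y => by
    rw [RingHom.coe_pow, iterate_frobenius]
  let f0 : L →ₐ[F] L := AlgHom.mk' ((frobenius L p) ^ n) (by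
    intro c y
    show ((frobenius L p) ^ n) (c • y) = c • ((frobenius L p) ^ n) y
    rw [hfrob, hfrob, Algebra.smul_def, Algebra.smul_def, mul_pow, ← map_pow, ← hF,
      FiniteField.pow_card])
  have hf0 : ∀ y : L, f0 y = y ^ (p ^ n) := fun y => hfrob y
  have hbij : Function.Bijective f0 :=
    Finite.injective_iff_bijective.mp f0.toRingHom.injective
  let φ : L ≃ₐ[F] L := AlgEquiv.ofBijective f0 hbij
  have hφ : ∀ y : L, φ y = y ^ (p ^ n) := fun y => hf0 y
  -- the extension has degree 2
  have hrank : Module.finrank F L = 2 := by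
    have h := Module.card_eq_pow_finrank (K := F) (V := L)
    rw [hF, hL, ← pow_mul] at h
    have := Nat.pow_right_injective hp.two_le h
    have hd : 0 < Module.finrank F L := Module.finrank_pos
    nlinarith [this]
  have hcard : Fintype.card (L ≃ₐ[F] L) = 2 := by
    rw [← Nat.card_eq_fintype_card, IsGalois.card_aut_eq_finrank, hrank]
  -- `φ` is not the identity
  have hwitness : ∃ w : L, w ^ (p ^ n) ≠ w := by
    by_contra hcon
    push_neg at hcon
    have hne : (Polynomial.X ^ (p ^ n) - Polynomial.X : Polynomial L) ≠ 0 :=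
      FiniteField.X_pow_card_sub_X_ne_zero L (lt_of_lt_of_le one_lt_two hq2)
    have h1 : (Finset.univ : Finset L) ⊆
        (Polynomial.X ^ (p ^ n) - Polynomial.X : Polynomial L).roots.toFinset := by
      intro w _
      rw [Multiset.mem_toFinset, Polynomial.mem_roots hne]
      simp [Polynomial.IsRoot, hcon w]
    have hcardle : Fintype.card L ≤ p ^ n := by
      calc Fintype.card L = (Finset.univ : Finset L).card := (Finset.card_univ).symm
        _ ≤ _ := Finset.card_le_card h1
        _ ≤ (Polynomial.X ^ (p ^ n) - Polynomial.X : Polynomial L).roots.card :=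
            Multiset.toFinset_card_le _
        _ ≤ (Polynomial.X ^ (p ^ n) - Polynomial.X : Polynomial L).natDegree :=
            Polynomial.card_roots' _
        _ = p ^ n := FiniteField.X_pow_card_sub_X_natDegree_eq L
            (lt_of_lt_of_le one_lt_two hq2)
    rw [hL] at hcardle
    have : p ^ n < p ^ (2 * n) := Nat.pow_lt_pow_right hp.one_lt (by omega)
    omega
  obtain ⟨w, hw⟩ := hwitness
  have hφne : φ ≠ AlgEquiv.refl := by
    intro h
    exact hw (by rw [← hφ w, h]; rfl)
  have hrne : (AlgEquiv.refl : L ≃ₐ[F] L) ≠ φ := Ne.symm hφne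
  -- the Galois group is `{1, φ}`
  have huniv : (Finset.univ : Finset (L ≃ₐ[F] L)) = {AlgEquiv.refl, φ} := by
    symm
    apply Finset.eq_of_subset_of_card_le (Finset.subset_univ _)
    rw [Finset.card_univ, hcard, Finset.card_pair hrne]
  -- trace formula
  have htr : ∀ z : L, algebraMap F L (Algebra.trace F L z) = z + z ^ (p ^ n) := by
    intro z
    rw [trace_eq_sum_automorphisms, huniv, Finset.sum_pair hrne, hφ]
    rfl
  -- algebraic setup
  have hx0 : x ≠ 0 := by
    intro h
    rw [h, zero_pow (by omega : 3 * (p ^ n - 1) ≠ 0)] at hx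
    exact one_ne_zero hx.symm
  set y := x ^ (p ^ n - 1) with hy
  have hy3 : y ^ 3 = 1 := by rw [hy, ← pow_mul, mul_comm, hx]
  have hypow : ∀ m : ℕ, y ^ m = y ^ (m % 3) := by
    intro m
    conv_lhs => rw [← Nat.div_add_mod m 3]
    rw [pow_add, pow_mul, hy3, one_pow, one_mul]
  have hxq : x ^ (p ^ n) = x * y := by
    rw [hy, ← pow_succ']
    congr 1
    omega
  have hxs : x ^ s = x * y ^ k := by
    rw [hsk, pow_add, pow_one, mul_comm k, pow_mul, hy]
  have hyq : y ^ (p ^ n) = y ^ 2 := by rw [hypow, hp3]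
  -- `k % 3 ≠ 2`
  have hq2' : 2 ≤ p ^ (2 * n) := le_trans hq2 (Nat.pow_le_pow_right hp.pos (by omega))
  have hk3 : k % 3 ≠ 2 := by
    intro hk2
    have hpow2 : p ^ (2 * n) = (p ^ n) ^ 2 := by rw [← pow_mul, mul_comm]
    have hmod : (p ^ n) ^ 2 % 3 = 1 := by rw [Nat.pow_mod, hp3]
    have h3 : 3 ∣ p ^ (2 * n) - 1 := by omega
    have hmul := Nat.mul_mod k (p ^ n - 1) 3
    have hm1 : (p ^ n - 1) % 3 = 1 := by omega
    rw [hk2, hm1] at hmul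
    have h3s : 3 ∣ s := by omega
    have : (3 : ℕ) ∣ 1 := hs ▸ Nat.dvd_gcd h3s h3
    omega
  -- the key identity `z + z^q = 0`
  have key : (x ^ s - x) + (x ^ s - x) ^ (p ^ n) = 0 := by
    have hsub : (x ^ s - x) ^ (p ^ n) = (x ^ s) ^ (p ^ n) - x ^ (p ^ n) := by
      have h := map_sub ((frobenius L p) ^ n) (x ^ s) x
      rwa [hfrob, hfrob, hfrob] at h
    have e1 : (y ^ k) ^ (p ^ n) = y ^ (2 * k) := by
      rw [← pow_mul, mul_comm k (p ^ n), pow_mul, hyq, ← pow_mul]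
    rw [hsub, hxs, mul_pow, e1, hxq]
    have hk01 : k % 3 = 0 ∨ k % 3 = 1 := by omega
    rcases hk01 with hk | hk
    · rw [hypow k, hypow (2 * k), hk, show 2 * k % 3 = 0 by omega, pow_zero]
      ring
    · rw [hypow k, hypow (2 * k), hk, show 2 * k % 3 = 2 by omega, pow_one]
      linear_combination x * hy3
  -- conclude
  have htr2 := htr (x ^ s - x)
  rw [key] at htr2
  exact (algebraMap F L).injective (by rw [htr2, map_zero])
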